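/- arXiv:0907.2964 — 4 statements merged into one kernel-verified Lean document; each statement's English description precedes it below -/
import Mathlib

section
/- Let Θ be a non-constant inner function and φ ∈ L²(∂𝔻). Then ‖P_Θ(φ) - conj(Θ(0)) P_Θ(Θφ)‖ / (1 - |Θ(0)|²)^{1/2} ≤ ‖A_φ‖. -/
open MeasureTheory Complex Filter
open scoped ENNReal

noncomputable section

instance : Fact (0 < 2 * Real.pi) := ⟨by positivity⟩

/-- The circle group `ℝ / 2πℤ`, parametrizing the unit circle `∂𝔻`. -/
abbrev 𝕋 := AddCircle (2 * Real.pi)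

/-- Normalized arclength (Haar) measure `|dζ|/2π` on the circle. -/
abbrev μT : Measure 𝕋 := AddCircle.haarAddCircle

/-- The boundary point `e^{iθ} ∈ ∂𝔻` corresponding to `θ : 𝕋`. -/
def bz (θ : 𝕋) : ℂ := (AddCircle.toCircle θ : ℂ)

/-- The `L²(∂𝔻, |dζ|/2π)` inner product `⟨f, g⟩ = ∫ f conj(g)`. -/
def ip (f g : 𝕋 → ℂ) : ℂ := ∫ θ, f θ * (starRingEnd ℂ) (g θ) ∂μT

/-- The `L²(∂𝔻, |dζ|/2π)` norm. -/
def nrm2 (f : 𝕋 → ℂ) : ℝ := (∫ θ, ‖f θ‖ ^ 2 ∂μT) ^ (1 / 2 : ℝ)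

/-- The essential supremum (`L^∞`) norm on `∂𝔻`. -/
def nrmInf (f : 𝕋 → ℂ) : ℝ := (eLpNorm f ⊤ μT).toReal

/-- `f` belongs to the Hardy space `H²`, viewed via boundary values: `f ∈ L²` and all
negatively-indexed Fourier coefficients vanish. -/
def MemH2 (f : 𝕋 → ℂ) : Prop :=
  MemLp f 2 μT ∧ ∀ n : ℤ, n < 0 → fourierCoeff f n = 0

/-- An inner function, recorded through its boundary values: an `H²` function which is
unimodular a.e. on `∂𝔻`. -/
structure InnerFn where
  toFun : 𝕋 → ℂ
  memH2 : MemH2 toFun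
  unimod : ∀ᵐ θ ∂μT, ‖toFun θ‖ = 1

/-- The Poisson extension `𝔓f` of a boundary function `f` at a point `l` of `𝔻`. -/
def poisson (f : 𝕋 → ℂ) (l : ℂ) : ℂ :=
  ∫ θ, (((1 - ‖l‖ ^ 2) / ‖bz θ - l‖ ^ 2 : ℝ) : ℂ) * f θ ∂μT

/-- The value `Θ(l)` of an inner function at a point `l ∈ 𝔻`, recovered from its
boundary values by the Poisson integral. -/
def InnerFn.dval (Θ : InnerFn) (l : ℂ) : ℂ := poisson Θ.toFun l

/-- `Θ` is a non-constant inner function. -/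
def InnerFn.NonConst (Θ : InnerFn) : Prop := ¬ ∃ c : ℂ, ∀ᵐ θ ∂μT, Θ.toFun θ = c

/-- Membership in the model space `K_Θ = H² ⊖ ΘH²`: `f ∈ H²` and `f ⟂ Θg` for all `g ∈ H²`. -/
def MemK (Θ : InnerFn) (f : 𝕋 → ℂ) : Prop :=
  MemH2 f ∧ ∀ g : 𝕋 → ℂ, MemH2 g → ip f (fun θ => Θ.toFun θ * g θ) = 0

/-- `p` is the orthogonal projection `P_Θ(u)` of `u ∈ L²` onto the model space `K_Θ`:
`p ∈ K_Θ` and `u - p ⟂ K_Θ`. -/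
def IsProjK (Θ : InnerFn) (u p : 𝕋 → ℂ) : Prop :=
  MemK Θ p ∧ ∀ k : 𝕋 → ℂ, MemK Θ k → ip (fun θ => u θ - p θ) k = 0

/-- The norm (possibly `∞`) of the truncated Toeplitz operator `A_φ f = P_Θ(φ f)`,
densely defined on `K_Θ^∞ = K_Θ ∩ H^∞`: the supremum of `‖P_Θ(φ f)‖` over unit vectors
`f ∈ K_Θ ∩ H^∞`. -/
def ttNorm (Θ : InnerFn) (φ : 𝕋 → ℂ) : ℝ≥0∞ :=
  sSup {c : ℝ≥0∞ | ∃ f p : 𝕋 → ℂ, MemK Θ f ∧ MemLp f ⊤ μT ∧ nrm2 f = 1 ∧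
    IsProjK Θ (fun θ => φ θ * f θ) p ∧ c = ENNReal.ofReal (nrm2 p)}

/-- The reproducing kernel `k_λ(z) = (1 - conj(Θ(λ))Θ(z))/(1 - conj(λ)z)` of `K_Θ`,
as a boundary function. -/
def kfun (Θ : InnerFn) (l : ℂ) (θ : 𝕋) : ℂ :=
  (1 - (starRingEnd ℂ) (Θ.dval l) * Θ.toFun θ) / (1 - (starRingEnd ℂ) l * bz θ)

/-- The Stolz (nontangential approach) region at a boundary point `z0 ∈ ∂𝔻` with
aperture `κ`. -/
def stolzAt (z0 : ℂ) (κ : ℝ) : Set ℂ := {z : ℂ | ‖z‖ < 1 ∧ ‖z - z0‖ < κ * (1 - ‖z‖)}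

/-- `f` has nontangential limit `L` at the boundary point `z0`. -/
def NTLim (f : ℂ → ℂ) (z0 L : ℂ) : Prop :=
  ∀ κ : ℝ, 1 < κ → Tendsto f (nhdsWithin z0 (stolzAt z0 κ)) (nhds L)

/-- `Θ` has a finite angular derivative at `ζ ∈ ∂𝔻`, with nontangential boundary value `w`
(of modulus one) and angular derivative `w'`: equivalently, `(Θ(z) - w)/(z - ζ)` has
nontangential limit `w'` at `ζ`. -/
def HasAngularDeriv (Θ : InnerFn) (ζ w w' : ℂ) : Prop :=
  ‖w‖ = 1 ∧ NTLim Θ.dval ζ w ∧ NTLim (fun z => (Θ.dval z - w) / (z - ζ)) ζ w'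

end


lemma integrable_of_L2 {f : 𝕋 → ℂ} (hf : MemLp f 2 μT) : Integrable f μT :=
  hf.integrable (by norm_num)

lemma dval_zero (Θ : InnerFn) : Θ.dval 0 = ∫ θ, Θ.toFun θ ∂μT := by
  unfold InnerFn.dval poisson
  apply integral_congr_ae
  filter_upwards with θ
  have : ‖bz θ‖ = 1 := by simp [bz, Circle.norm_coe]
  simp [this]

lemma mul_conj_norm (z : ℂ) : z * (starRingEnd ℂ) z = ((‖z‖ ^ 2 : ℝ) : ℂ) := by
  rw [Complex.mul_conj]; norm_cast; rw [Complex.normSq_eq_norm_sq]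

/-- The key integral identity `∫ ‖1 - conj(Θ₀) Θ‖² = 1 - ‖Θ₀‖²`. -/
lemma key_int (Θ : InnerFn) :
    (∫ θ, ‖1 - (starRingEnd ℂ) (Θ.dval 0) * Θ.toFun θ‖ ^ 2 ∂μT) = 1 - ‖Θ.dval 0‖ ^ 2 := by
  set Θ0 := Θ.dval 0 with hΘ0
  set c := (starRingEnd ℂ) Θ0 with hc
  have hint : Integrable Θ.toFun μT := integrable_of_L2 Θ.memH2.1
  have hintc : Integrable (fun θ => (starRingEnd ℂ) (c * Θ.toFun θ)) μT := by
    rw [← memLp_one_iff_integrable] at hint ⊢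
    refine ⟨Complex.continuous_conj.comp_aestronglyMeasurable (hint.1.const_mul c), ?_⟩
    rw [eLpNorm_congr_norm_ae (g := fun θ => c * Θ.toFun θ)
      (Eventually.of_forall (fun x => by simp))]
    exact (hint.const_mul c).2
  have h0 : (∫ θ, Θ.toFun θ ∂μT) = Θ0 := (dval_zero Θ).symm
  suffices hmain : (∫ θ, ((‖1 - c * Θ.toFun θ‖ ^ 2 : ℝ) : ℂ) ∂μT)
      = (((1 - ‖Θ0‖ ^ 2 : ℝ)) : ℂ) by
    exact Complex.ofReal_inj.mp ((integral_ofReal (𝕜 := ℂ)).symm.trans hmain)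
  have hcongr : (∫ θ, ((‖1 - c * Θ.toFun θ‖ ^ 2 : ℝ) : ℂ) ∂μT)
      = ∫ θ, (1 - c * Θ.toFun θ - (starRingEnd ℂ) (c * Θ.toFun θ) + ((‖Θ0‖ ^ 2 : ℝ) : ℂ)) ∂μT := by
    apply integral_congr_ae
    filter_upwards [Θ.unimod] with θ hθ
    rw [← mul_conj_norm]
    have h2 : ((‖Θ0‖ ^ 2 : ℝ) : ℂ) = (c * Θ.toFun θ) * (starRingEnd ℂ) (c * Θ.toFun θ) := by
      rw [mul_conj_norm, norm_mul, hθ, hc, RCLike.norm_conj, mul_one]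
    rw [map_sub, map_one, h2]
    ring
  rw [hcongr]
  have i2 : Integrable (fun θ => (1:ℂ) - c * Θ.toFun θ) μT :=
    (integrable_const 1).sub (hint.const_mul c)
  have i1 : Integrable (fun θ => 1 - c * Θ.toFun θ - (starRingEnd ℂ) (c * Θ.toFun θ)) μT :=
    i2.sub hintc
  have e1 : (∫ θ, (1 - c * Θ.toFun θ - (starRingEnd ℂ) (c * Θ.toFun θ) + ((‖Θ0‖ ^ 2 : ℝ) : ℂ)) ∂μT)
      = (∫ θ, (1 - c * Θ.toFun θ - (starRingEnd ℂ) (c * Θ.toFun θ)) ∂μT)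
        + ∫ _, ((‖Θ0‖ ^ 2 : ℝ) : ℂ) ∂μT := integral_add i1 (integrable_const _)
  have e2 : (∫ θ, (1 - c * Θ.toFun θ - (starRingEnd ℂ) (c * Θ.toFun θ)) ∂μT)
      = (∫ θ, ((1:ℂ) - c * Θ.toFun θ) ∂μT) - ∫ θ, (starRingEnd ℂ) (c * Θ.toFun θ) ∂μT :=
    integral_sub i2 hintc
  have e3 : (∫ θ, ((1:ℂ) - c * Θ.toFun θ) ∂μT)
      = (∫ _, (1:ℂ) ∂μT) - ∫ θ, c * Θ.toFun θ ∂μT :=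
    integral_sub (integrable_const 1) (hint.const_mul c)
  have e4 : (∫ θ, c * Θ.toFun θ ∂μT) = c * Θ0 := by rw [integral_const_mul, h0]
  have e5 : (∫ θ, (starRingEnd ℂ) (c * Θ.toFun θ) ∂μT) = (starRingEnd ℂ) (c * Θ0) := by
    rw [integral_conj, e4]
  have hK : c * Θ0 = ((‖Θ0‖ ^ 2 : ℝ) : ℂ) := by rw [hc, mul_comm, mul_conj_norm]
  rw [e1, e2, e3, e4, e5, integral_const, integral_const, hK]
  simp only [measure_univ, probReal_univ, ENNReal.toReal_one, one_smul, Complex.conj_ofReal]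
  push_cast
  ring

lemma d_pos (Θ : InnerFn) (hΘ : Θ.NonConst) : 0 < 1 - ‖Θ.dval 0‖ ^ 2 := by
  set c := (starRingEnd ℂ) (Θ.dval 0) with hc
  have hkey := key_int Θ
  have hnonneg : 0 ≤ 1 - ‖Θ.dval 0‖ ^ 2 :=
    hkey ▸ integral_nonneg (fun θ => by positivity)
  rcases eq_or_lt_of_le hnonneg with heq | h
  swap
  · exact h
  exfalso
  by_cases hz : Θ.dval 0 = 0
  · rw [hz] at heq; simp at heq
  · have hint2 : Integrable (fun θ => ‖1 - c * Θ.toFun θ‖ ^ 2) μT := by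
      have hAESM : AEStronglyMeasurable (fun θ => ‖1 - c * Θ.toFun θ‖ ^ 2) μT := by
        have h1 : AEStronglyMeasurable (fun θ => (1:ℂ) - c * Θ.toFun θ) μT :=
          aestronglyMeasurable_const.sub (Θ.memH2.1.aestronglyMeasurable.const_mul c)
        have h2 := h1.norm
        have : (fun θ => ‖1 - c * Θ.toFun θ‖ ^ 2)
            = fun θ => ‖1 - c * Θ.toFun θ‖ * ‖1 - c * Θ.toFun θ‖ := by
          ext θ; ring
        rw [this]
        exact h2.mul h2
      refine Integrable.mono' (integrable_const ((1 + ‖c‖) ^ 2)) hAESM ?_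
      filter_upwards [Θ.unimod] with θ hθ
      rw [Real.norm_eq_abs, _root_.abs_of_nonneg (by positivity)]
      have hb : ‖1 - c * Θ.toFun θ‖ ≤ 1 + ‖c‖ := by
        calc ‖1 - c * Θ.toFun θ‖ ≤ ‖(1:ℂ)‖ + ‖c * Θ.toFun θ‖ := norm_sub_le _ _
        _ = 1 + ‖c‖ := by rw [norm_one, norm_mul, hθ, mul_one]
      exact pow_le_pow_left₀ (norm_nonneg _) hb 2
    have hzero := (integral_eq_zero_iff_of_nonneg_ae
      (Eventually.of_forall (fun θ => by positivity)) hint2).mp (by rw [hkey, ← heq])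
    apply hΘ
    refine ⟨c⁻¹, ?_⟩
    have hzero' : ∀ᵐ θ ∂μT, ‖1 - c * Θ.toFun θ‖ ^ 2 = 0 := hzero
    filter_upwards [hzero'] with θ hθ
    have hcne : c ≠ 0 := by simpa [hc] using hz
    have h1 : (1:ℂ) - c * Θ.toFun θ = 0 := by
      have := pow_eq_zero_iff (n := 2) (by norm_num) |>.mp hθ
      exact norm_eq_zero.mp this
    field_simp
    linear_combination (-1 : ℂ) * h1

lemma integrable_mul2 {f g : 𝕋 → ℂ} (hf : MemLp f 2 μT) (hg : MemLp g 2 μT) :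
    Integrable (fun θ => f θ * g θ) μT := by
  have := hg.smul (r := 1) hf
  rw [memLp_one_iff_integrable] at this
  exact this

lemma memℒp_conj {f : 𝕋 → ℂ} (hf : MemLp f 2 μT) :
    MemLp (fun θ => (starRingEnd ℂ) (f θ)) 2 μT := by
  refine ⟨(Complex.continuous_conj.comp_aestronglyMeasurable hf.1), ?_⟩
  rw [eLpNorm_congr_norm_ae (g := f) (Eventually.of_forall (fun x => by simp))]
  exact hf.2

lemma integral_fourier_eq_zero {n : ℤ} (hn : n ≠ 0) : (∫ t, fourier n t ∂μT) = 0 := by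
  have h := orthonormal_fourier (T := 2 * Real.pi)
  rw [orthonormal_iff_ite] at h
  have h2 := h 0 n
  rw [ContinuousMap.inner_toLp μT (fourier 0) (fourier n), if_neg (fun hh => hn hh.symm)] at h2
  simpa [fourier_zero] using h2

lemma fourierCoeff_congr_ae' {f g : 𝕋 → ℂ} (h : f =ᵐ[μT] g) (n : ℤ) :
    fourierCoeff f n = fourierCoeff g n := by
  unfold fourierCoeff
  exact integral_congr_ae (h.mono fun θ hθ => by dsimp only; rw [hθ])

lemma fourierCoeff_conj (f : 𝕋 → ℂ) (n : ℤ) :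
    fourierCoeff (fun θ => (starRingEnd ℂ) (f θ)) n
      = (starRingEnd ℂ) (fourierCoeff f (-n)) := by
  unfold fourierCoeff
  rw [← integral_conj]
  apply integral_congr_ae
  filter_upwards with θ
  simp only [smul_eq_mul, map_mul, ← fourier_neg, neg_neg]

/-- Parseval-type identity: for `F, G ∈ H²`, `∫ F G = (∫ F)(∫ G)`. -/
lemma H2_mul_int {F G : 𝕋 → ℂ} (hF : MemH2 F) (hG : MemH2 G) :
    ∫ θ, F θ * G θ ∂μT = (∫ θ, F θ ∂μT) * (∫ θ, G θ ∂μT) := by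
  have hFc : MemLp (fun θ => (starRingEnd ℂ) (F θ)) 2 μT := memℒp_conj hF.1
  set X : Lp ℂ 2 μT := hFc.toLp _ with hX
  set Y : Lp ℂ 2 μT := hG.1.toLp _ with hY
  have hinner : (inner ℂ X Y : ℂ) = ∫ θ, F θ * G θ ∂μT := by
    rw [MeasureTheory.L2.inner_def]
    apply integral_congr_ae
    filter_upwards [hFc.coeFn_toLp, hG.1.coeFn_toLp] with θ h1 h2
    rw [hX, hY, h1, h2]; simp [mul_comm]
  have htsum := fourierBasis.tsum_inner_mul_inner X Y
  have hterm : ∀ n : ℤ, (inner ℂ X (fourierBasis (T := 2 * Real.pi) n) : ℂ) * (inner ℂ (fourierBasis (T := 2 * Real.pi) n) Y : ℂ)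
      = (if n = 0 then (∫ θ, F θ ∂μT) * (∫ θ, G θ ∂μT) else 0) := by
    intro n
    have hXn : (inner ℂ (fourierBasis (T := 2 * Real.pi) n) X : ℂ) = fourierCoeff (X : 𝕋 → ℂ) n := by
      rw [← fourierBasis_repr, fourierBasis.repr_apply_apply]
    have hYn : (inner ℂ (fourierBasis (T := 2 * Real.pi) n) Y : ℂ) = fourierCoeff (Y : 𝕋 → ℂ) n := by
      rw [← fourierBasis_repr, fourierBasis.repr_apply_apply]
    have hcX : fourierCoeff (X : 𝕋 → ℂ) n = (starRingEnd ℂ) (fourierCoeff F (-n)) := by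
      rw [fourierCoeff_congr_ae' (hFc.coeFn_toLp), fourierCoeff_conj]
    have hcY : fourierCoeff (Y : 𝕋 → ℂ) n = fourierCoeff G n :=
      fourierCoeff_congr_ae' (hG.1.coeFn_toLp) n
    rw [← inner_conj_symm X, hXn, hYn, hcX, hcY, starRingEnd_self_apply]
    by_cases h0 : n = 0
    · subst h0
      rw [if_pos rfl, neg_zero]
      congr 1 <;>
        (unfold fourierCoeff; apply integral_congr_ae; filter_upwards with θ;
          rw [neg_zero, fourier_zero, one_smul])
    · rw [if_neg h0]
      rcases lt_or_gt_of_ne h0 with hlt | hgt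
      · rw [hG.2 n hlt, mul_zero]
      · rw [hF.2 (-n) (by omega)]; simp
  rw [← hinner, ← htsum]
  rw [tsum_congr hterm]
  simp

lemma integrable_fourier_mul {u : 𝕋 → ℂ} (hu : Integrable u μT) (n : ℤ) :
    Integrable (fun t => fourier n t * u t) μT :=
  hu.bdd_mul (map_continuous (fourier n)).aestronglyMeasurable
    (c := 1) (ae_of_all _ fun t => le_of_eq (by simp [Circle.norm_coe]))

lemma fourierCoeff_comb {u v : 𝕋 → ℂ} (hu : Integrable u μT) (hv : Integrable v μT)
    (a b : ℂ) (n : ℤ) :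
    fourierCoeff (fun θ => a * u θ + b * v θ) n
      = a * fourierCoeff u n + b * fourierCoeff v n := by
  unfold fourierCoeff
  simp only [smul_eq_mul]
  have key : ∀ θ : 𝕋, fourier (-n) θ * (a * u θ + b * v θ)
      = a * (fourier (-n) θ * u θ) + b * (fourier (-n) θ * v θ) := fun θ => by ring
  simp only [key]
  rw [integral_add ((integrable_fourier_mul hu (-n)).const_mul a)
    ((integrable_fourier_mul hv (-n)).const_mul b), integral_const_mul, integral_const_mul]

/-- `ip` is linear in the first argument for combinations. -/
lemma ip_comb {u v k : 𝕋 → ℂ} (hu : MemLp u 2 μT) (hv : MemLp v 2 μT) (hk : MemLp k 2 μT)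
    (a b : ℂ) :
    ip (fun θ => a * u θ + b * v θ) k = a * ip u k + b * ip v k := by
  unfold ip
  have key : ∀ θ : 𝕋, (a * u θ + b * v θ) * (starRingEnd ℂ) (k θ)
      = a * (u θ * (starRingEnd ℂ) (k θ)) + b * (v θ * (starRingEnd ℂ) (k θ)) := fun θ => by ring
  simp only [key]
  rw [integral_add ((integrable_mul2 hu (memℒp_conj hk)).const_mul a)
    ((integrable_mul2 hv (memℒp_conj hk)).const_mul b), integral_const_mul, integral_const_mul]

lemma memH2_comb {u v : 𝕋 → ℂ} (hu : MemH2 u) (hv : MemH2 v) (a b : ℂ) :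
    MemH2 (fun θ => a * u θ + b * v θ) := by
  refine ⟨(hu.1.const_mul a).add (hv.1.const_mul b), fun n hn => ?_⟩
  rw [fourierCoeff_comb (integrable_of_L2 hu.1) (integrable_of_L2 hv.1),
    hu.2 n hn, hv.2 n hn, mul_zero, mul_zero, add_zero]

lemma memL2_Theta_mul (Θ : InnerFn) {g : 𝕋 → ℂ} (hg : MemLp g 2 μT) :
    MemLp (fun θ => Θ.toFun θ * g θ) 2 μT := by
  refine ⟨Θ.memH2.1.aestronglyMeasurable.mul hg.aestronglyMeasurable, ?_⟩
  rw [eLpNorm_congr_norm_ae (g := g) ?_]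
  · exact hg.2
  · filter_upwards [Θ.unimod] with θ hθ
    rw [norm_mul, hθ, one_mul]

lemma memK_comb (Θ : InnerFn) {u v : 𝕋 → ℂ} (hu : MemK Θ u) (hv : MemK Θ v) (a b : ℂ) :
    MemK Θ (fun θ => a * u θ + b * v θ) := by
  refine ⟨memH2_comb hu.1 hv.1 a b, fun g hg => ?_⟩
  rw [ip_comb hu.1.1 hv.1.1 (memL2_Theta_mul Θ hg.1) a b, hu.2 g hg, hv.2 g hg,
    mul_zero, mul_zero, add_zero]

lemma fourierCoeff_one {n : ℤ} (hn : n ≠ 0) : fourierCoeff (fun _ : 𝕋 => (1:ℂ)) n = 0 := by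
  unfold fourierCoeff
  simp only [smul_eq_mul, mul_one]
  exact integral_fourier_eq_zero (neg_ne_zero.mpr hn)

lemma memK_kernel (Θ : InnerFn) :
    MemK Θ (fun θ => 1 - (starRingEnd ℂ) (Θ.dval 0) * Θ.toFun θ) := by
  set c := (starRingEnd ℂ) (Θ.dval 0) with hc
  have heq : (fun θ : 𝕋 => 1 - c * Θ.toFun θ)
      = fun θ => 1 * (fun _ : 𝕋 => (1:ℂ)) θ + (-c) * Θ.toFun θ := by
    funext θ; simp; ring
  constructor
  · rw [heq]
    refine memH2_comb ⟨memLp_const 1, fun n hn => fourierCoeff_one (by omega)⟩ Θ.memH2 1 (-c)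
  · intro g hg
    have hThg : MemLp (fun θ => Θ.toFun θ * g θ) 2 μT := memL2_Theta_mul Θ hg.1
    rw [heq, ip_comb (memLp_const 1) Θ.memH2.1 hThg 1 (-c)]
    have e1 : ip (fun _ : 𝕋 => (1:ℂ)) (fun θ => Θ.toFun θ * g θ)
        = (starRingEnd ℂ) ((∫ θ, Θ.toFun θ ∂μT) * ∫ θ, g θ ∂μT) := by
      unfold ip
      simp only [one_mul]
      rw [← H2_mul_int Θ.memH2 hg, ← integral_conj]
    have e2 : ip Θ.toFun (fun θ => Θ.toFun θ * g θ) = (starRingEnd ℂ) (∫ θ, g θ ∂μT) := by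
      unfold ip
      rw [← integral_conj]
      apply integral_congr_ae
      filter_upwards [Θ.unimod] with θ hθ
      have : Θ.toFun θ * (starRingEnd ℂ) (Θ.toFun θ) = 1 := by
        rw [mul_conj_norm, hθ]; norm_num
      calc Θ.toFun θ * (starRingEnd ℂ) (Θ.toFun θ * g θ)
          = (Θ.toFun θ * (starRingEnd ℂ) (Θ.toFun θ)) * (starRingEnd ℂ) (g θ) := by
            rw [map_mul]; ring
        _ = (starRingEnd ℂ) (g θ) := by rw [this, one_mul]
    rw [e1, e2, map_mul, ← dval_zero, ← hc]
    ring

lemma nrm2_const_mul (r : ℝ) (hr : 0 ≤ r) (g : 𝕋 → ℂ) :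
    nrm2 (fun θ => (r : ℂ) * g θ) = r * nrm2 g := by
  unfold nrm2
  have key : ∀ θ : 𝕋, ‖(r:ℂ) * g θ‖ ^ 2 = r ^ 2 * ‖g θ‖ ^ 2 := fun θ => by
    rw [norm_mul, Complex.norm_real, Real.norm_eq_abs, _root_.abs_of_nonneg hr]; ring
  simp only [key]
  rw [integral_const_mul,
    Real.mul_rpow (by positivity) (integral_nonneg (fun θ => by positivity))]
  congr 1
  rw [← Real.sqrt_eq_rpow, Real.sqrt_sq hr]

/-- `‖P_Θ(φ) - conj(Θ(0)) P_Θ(Θφ)‖ / (1-|Θ(0)|²)^{1/2} ≤ ‖A_φ‖`. -/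
theorem ttNorm_lower_proj (Θ : InnerFn) (hΘ : Θ.NonConst) (φ : 𝕋 → ℂ)
    (hφ : MemLp φ 2 μT) (p q : 𝕋 → ℂ) (hp : IsProjK Θ φ p)
    (hq : IsProjK Θ (fun θ => Θ.toFun θ * φ θ) q) :
    ENNReal.ofReal (nrm2 (fun θ => p θ - (starRingEnd ℂ) (Θ.dval 0) * q θ) /
      Real.sqrt (1 - ‖Θ.dval 0‖ ^ 2)) ≤ ttNorm Θ φ := by
  set c := (starRingEnd ℂ) (Θ.dval 0) with hc
  set d := 1 - ‖Θ.dval 0‖ ^ 2 with hdd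
  have hd : 0 < d := d_pos Θ hΘ
  set s := Real.sqrt d with hss
  have hs : 0 < s := Real.sqrt_pos.mpr hd
  set a : ℂ := ((s⁻¹ : ℝ) : ℂ) with ha
  set f : 𝕋 → ℂ := fun θ => a * (1 - c * Θ.toFun θ) with hf
  set p' : 𝕋 → ℂ := fun θ => a * (p θ - c * q θ) with hp'
  -- the value
  have hval : nrm2 p' = nrm2 (fun θ => p θ - c * q θ) / s := by
    rw [hp', ha, nrm2_const_mul s⁻¹ (inv_nonneg.mpr hs.le), div_eq_inv_mul]
  -- MemK f
  have hk0 : MemK Θ (fun θ => 1 - c * Θ.toFun θ) := memK_kernel Θ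
  have hmemKf : MemK Θ f := by
    have heq : f = fun θ => a * (fun θ : 𝕋 => 1 - c * Θ.toFun θ) θ
        + (0:ℂ) * (fun θ : 𝕋 => 1 - c * Θ.toFun θ) θ := by
      funext θ; simp [hf]
    rw [heq]
    exact memK_comb Θ hk0 hk0 a 0
  -- f bounded
  have hinf : MemLp f ⊤ μT := by
    refine memLp_top_of_bound ?_ (s⁻¹ * (1 + ‖c‖)) ?_
    · exact ((aestronglyMeasurable_const.sub
        (Θ.memH2.1.aestronglyMeasurable.const_mul c)).const_mul a)
    · filter_upwards [Θ.unimod] with θ hθ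
      rw [hf]
      simp only [norm_mul, ha, Complex.norm_real, Real.norm_eq_abs,
        _root_.abs_of_nonneg (inv_nonneg.mpr hs.le)]
      refine mul_le_mul_of_nonneg_left ?_ (inv_nonneg.mpr hs.le)
      calc ‖1 - c * Θ.toFun θ‖ ≤ ‖(1:ℂ)‖ + ‖c * Θ.toFun θ‖ := norm_sub_le _ _
      _ = 1 + ‖c‖ := by rw [norm_one, norm_mul, hθ, mul_one]
  -- nrm2 f = 1
  have hnrm1 : nrm2 f = 1 := by
    rw [hf, ha, nrm2_const_mul s⁻¹ (inv_nonneg.mpr hs.le)]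
    have : nrm2 (fun θ => 1 - c * Θ.toFun θ) = s := by
      unfold nrm2
      rw [key_int Θ, ← hdd, hss, Real.sqrt_eq_rpow]
    rw [this, inv_mul_cancel₀ hs.ne']
  -- IsProjK for φ * f with projection p'
  have hproj : IsProjK Θ (fun θ => φ θ * f θ) p' := by
    constructor
    · have heq : p' = fun θ => a * p θ + (-(a * c)) * q θ := by
        funext θ; rw [hp']; ring
      rw [heq]
      exact memK_comb Θ hp.1 hq.1 a (-(a * c))
    · intro k hk
      have heq2 : (fun θ => φ θ * f θ - p' θ)
          = fun θ => a * ((fun θ => φ θ - p θ) θ)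
            + (-(a * c)) * ((fun θ => Θ.toFun θ * φ θ - q θ) θ) := by
        funext θ; rw [hf, hp']; simp; ring
      rw [heq2, ip_comb (u := fun θ => φ θ - p θ) (v := fun θ => Θ.toFun θ * φ θ - q θ)
        (hφ.sub hp.1.1.1) ((memL2_Theta_mul Θ hφ).sub hq.1.1.1) hk.1.1,
        hp.2 k hk, hq.2 k hk]
      ring
  refine le_sSup ?_
  exact ⟨f, p', hmemKf, hinf, hnrm1, hproj, by rw [hval]⟩
end

section
/- If Θ is a non-constant inner function and φ ∈ K_Θ ∩ H^∞, then ‖φ‖_{L²} ≤ (1 - |Θ(0)|²)^{1/2} · ‖φ‖_∞. -/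
open MeasureTheory Complex Filter
open scoped ENNReal

/-- for `φ ∈ K_Θ ∩ H^∞`, `‖φ‖_{L²} ≤ (1-|Θ(0)|²)^{1/2} ‖φ‖_∞`. -/
theorem nrm2_le_of_memK (Θ : InnerFn) (hΘ : Θ.NonConst) (φ : 𝕋 → ℂ)
    (hφK : MemK Θ φ) (hphiInf : MemLp φ ⊤ μT) :
    nrm2 φ ≤ Real.sqrt (1 - ‖Θ.dval 0‖ ^ 2) * nrmInf φ := by
  classical
  have hφ2 : MemLp φ 2 μT := hφK.1.1
  have hΘ2 : MemLp Θ.toFun 2 μT := Θ.memH2.1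
  set M : ℝ := nrmInf φ with hMdef
  have hM0 : 0 ≤ M := ENNReal.toReal_nonneg
  -- Θ(0) is the mean of Θ
  have hc : Θ.dval 0 = ∫ θ, Θ.toFun θ ∂μT := by
    unfold InnerFn.dval poisson
    refine integral_congr_ae (Filter.Eventually.of_forall fun θ => ?_)
    simp [bz, Circle.norm_coe]
  set c : ℂ := ∫ θ, Θ.toFun θ ∂μT with hcdef
  set ψ : 𝕋 → ℂ := fun θ => 1 - c * (starRingEnd ℂ) (Θ.toFun θ) with hψdef
  have hΘint : Integrable Θ.toFun μT := hΘ2.integrable one_le_two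
  have hSint : Integrable (fun θ => ‖φ θ‖ ^ 2) μT := hφ2.norm.integrable_sq
  have hSintC : Integrable (fun θ => ((‖φ θ‖ ^ 2 : ℝ) : ℂ)) μT := hSint.ofReal
  have hconjΘ2 : MemLp (fun θ => (starRingEnd ℂ) (Θ.toFun θ)) 2 μT := by
    refine hΘ2.of_le ?_ (Filter.Eventually.of_forall fun θ => le_of_eq (RCLike.norm_conj _))
    exact Complex.continuous_conj.comp_aestronglyMeasurable hΘ2.aestronglyMeasurable
  have hψ2 : MemLp ψ 2 μT := (memLp_const 1).sub (hconjΘ2.const_mul c)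
  have hψint : Integrable ψ μT := hψ2.integrable one_le_two
  -- step A : orthogonality
  have hA : ∫ θ, ((‖φ θ‖ ^ 2 : ℝ) : ℂ) * (starRingEnd ℂ) (Θ.toFun θ) ∂μT = 0 := by
    have h0 := hφK.2 φ hφK.1
    unfold ip at h0
    rw [← h0]
    refine integral_congr_ae (Filter.Eventually.of_forall fun θ => ?_)
    simp only [map_mul]
    have hmc : ((‖φ θ‖ ^ 2 : ℝ) : ℂ) = φ θ * (starRingEnd ℂ) (φ θ) := by
      rw [Complex.mul_conj]
      norm_cast
      simp [Complex.sq_norm]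
    rw [hmc]; ring
  have hg1 : Integrable (fun θ => ((‖φ θ‖ ^ 2 : ℝ) : ℂ) * (starRingEnd ℂ) (Θ.toFun θ)) μT := by
    have h := Integrable.bdd_mul (c := 1) hSintC
      (Complex.continuous_conj.comp_aestronglyMeasurable hΘ2.aestronglyMeasurable) ?_
    · exact h.congr (Filter.Eventually.of_forall fun θ => mul_comm _ _)
    · filter_upwards [Θ.unimod] with θ hθ
      simp [RCLike.norm_conj, hθ]
  set I : ℝ := ∫ θ, ‖φ θ‖ ^ 2 ∂μT with hIdef
  have hI0 : 0 ≤ I := integral_nonneg fun θ => sq_nonneg _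
  -- key identity
  have hkey : (I : ℂ) = ∫ θ, ((‖φ θ‖ ^ 2 : ℝ) : ℂ) * ψ θ ∂μT := by
    have hpt : ∀ θ, ((‖φ θ‖ ^ 2 : ℝ) : ℂ) * ψ θ =
        ((‖φ θ‖ ^ 2 : ℝ) : ℂ) - c * (((‖φ θ‖ ^ 2 : ℝ) : ℂ) * (starRingEnd ℂ) (Θ.toFun θ)) := by
      intro θ; simp only [hψdef]; ring
    rw [integral_congr_ae (Filter.Eventually.of_forall hpt),
      integral_sub hSintC (hg1.const_mul c), integral_const_mul _ _, hA, mul_zero, sub_zero, hIdef]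
    exact (Complex.ofRealCLM.integral_comp_comm hSint).symm
  have hb1 : I ≤ ∫ θ, ‖φ θ‖ ^ 2 * ‖ψ θ‖ ∂μT := by
    calc I = ‖(I : ℂ)‖ := by
            rw [Complex.norm_real, Real.norm_of_nonneg hI0]
      _ = ‖∫ θ, ((‖φ θ‖ ^ 2 : ℝ) : ℂ) * ψ θ ∂μT‖ := by rw [hkey]
      _ ≤ ∫ θ, ‖((‖φ θ‖ ^ 2 : ℝ) : ℂ) * ψ θ‖ ∂μT := norm_integral_le_integral_norm _
      _ = ∫ θ, ‖φ θ‖ ^ 2 * ‖ψ θ‖ ∂μT := by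
            refine integral_congr_ae (Filter.Eventually.of_forall fun θ => ?_)
            show ‖((‖φ θ‖ ^ 2 : ℝ) : ℂ) * ψ θ‖ = ‖φ θ‖ ^ 2 * ‖ψ θ‖
            rw [norm_mul, Complex.norm_real, Real.norm_of_nonneg (sq_nonneg (‖φ θ‖))]
  -- a.e. bound by M
  have hφbd : ∀ᵐ θ ∂μT, ‖φ θ‖ ≤ M := by
    have h1 := ae_le_eLpNormEssSup (f := φ) (μ := μT)
    have hfin : eLpNormEssSup φ μT ≠ ⊤ := by
      rw [← eLpNorm_exponent_top]; exact hphiInf.2.ne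
    filter_upwards [h1] with θ hθ
    have h2 : ((‖φ θ‖₊ : ℝ≥0∞)).toReal ≤ (eLpNormEssSup φ μT).toReal :=
      ENNReal.toReal_mono hfin (by exact_mod_cast hθ)
    simpa [hMdef, nrmInf, eLpNorm_exponent_top] using h2
  have hprod2 : Integrable (fun θ => ‖φ θ‖ * ‖ψ θ‖) μT := by
    refine Integrable.mono' ((hψint.norm).const_mul M) ?_ ?_
    · exact hφ2.norm.aestronglyMeasurable.mul hψ2.norm.aestronglyMeasurable
    · filter_upwards [hφbd] with θ hθ
      rw [Real.norm_of_nonneg (by positivity)]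
      exact mul_le_mul_of_nonneg_right hθ (norm_nonneg _)
  have hb2 : ∫ θ, ‖φ θ‖ ^ 2 * ‖ψ θ‖ ∂μT ≤ M * ∫ θ, ‖φ θ‖ * ‖ψ θ‖ ∂μT := by
    rw [← integral_const_mul _ _]
    refine integral_mono_of_nonneg (Filter.Eventually.of_forall fun θ => by positivity)
      (hprod2.const_mul M) ?_
    filter_upwards [hφbd] with θ hθ
    calc ‖φ θ‖ ^ 2 * ‖ψ θ‖ = ‖φ θ‖ * (‖φ θ‖ * ‖ψ θ‖) := by ring
      _ ≤ M * (‖φ θ‖ * ‖ψ θ‖) := mul_le_mul_of_nonneg_right hθ (by positivity)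
  -- Cauchy-Schwarz
  have h2cast : ∀ x : ℝ, x ^ (2 : ℝ) = x ^ 2 := fun x => by
    rw [show (2 : ℝ) = ((2 : ℕ) : ℝ) by norm_num, Real.rpow_natCast]
  have hCS : ∫ θ, ‖φ θ‖ * ‖ψ θ‖ ∂μT ≤
      (∫ θ, ‖φ θ‖ ^ 2 ∂μT) ^ (1 / 2 : ℝ) * (∫ θ, ‖ψ θ‖ ^ 2 ∂μT) ^ (1 / 2 : ℝ) := by
    have hpq : Real.HolderConjugate 2 2 := Real.HolderConjugate.two_two
    have h2e : ENNReal.ofReal (2 : ℝ) = 2 := by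
      rw [ENNReal.ofReal_ofNat]
    have h := integral_mul_le_Lp_mul_Lq_of_nonneg (μ := μT) hpq
      (Filter.Eventually.of_forall fun θ => norm_nonneg (φ θ))
      (Filter.Eventually.of_forall fun θ => norm_nonneg (ψ θ))
      (by rw [h2e]; exact hφ2.norm) (by rw [h2e]; exact hψ2.norm)
    simpa [h2cast] using h
  -- compute ∫ ‖ψ‖²
  have hzint : Integrable (fun θ => c * (starRingEnd ℂ) (Θ.toFun θ)) μT := by
    have h := (integrable_const (1 : ℂ)).sub hψint
    refine h.congr (Filter.Eventually.of_forall fun θ => ?_)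
    simp only [hψdef, Pi.sub_apply]; ring
  have hz : ∫ θ, c * (starRingEnd ℂ) (Θ.toFun θ) ∂μT = c * (starRingEnd ℂ) c := by
    rw [integral_const_mul _ _, integral_conj]
  have hD : ∫ θ, ‖ψ θ‖ ^ 2 ∂μT = 1 - ‖c‖ ^ 2 := by
    have hre : Integrable (fun θ => (c * (starRingEnd ℂ) (Θ.toFun θ)).re) μT := hzint.re
    have hptD : ∀ᵐ θ ∂μT, ‖ψ θ‖ ^ 2 =
        1 + ‖c‖ ^ 2 - 2 * (c * (starRingEnd ℂ) (Θ.toFun θ)).re := by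
      filter_upwards [Θ.unimod] with θ hθ
      have hns : ‖ψ θ‖ ^ 2 = Complex.normSq (ψ θ) := by
        rw [Complex.sq_norm]
      rw [hns, hψdef]
      simp only []
      rw [Complex.normSq_sub]
      have habs : Complex.normSq (c * (starRingEnd ℂ) (Θ.toFun θ)) = ‖c‖ ^ 2 := by
        rw [map_mul, Complex.normSq_conj]
        have h1 : Complex.normSq (Θ.toFun θ) = 1 := by
          rw [← Complex.sq_norm, hθ]; norm_num
        rw [h1, mul_one, ← Complex.sq_norm]
      rw [habs]
      simp [Complex.normSq_one, Complex.conj_re]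
    have hcc : ∫ θ, (c * (starRingEnd ℂ) (Θ.toFun θ)).re ∂μT = ‖c‖ ^ 2 := by
      have h2 : (c * (starRingEnd ℂ) c).re = ‖c‖ ^ 2 := by
        rw [Complex.mul_conj, Complex.ofReal_re, Complex.normSq_eq_norm_sq]
      have h := integral_re hzint
      rw [hz] at h
      rw [← h2]
      simpa only [RCLike.re_to_complex] using h
    rw [integral_congr_ae hptD,
      integral_sub (integrable_const _) (hre.const_mul 2), integral_const,
      integral_const_mul _ _, hcc]
    simp only [measure_univ, probReal_univ, ENNReal.toReal_one, smul_eq_mul, one_mul]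
    ring
  -- assemble
  set S : ℝ := Real.sqrt (1 - ‖c‖ ^ 2) with hSsq
  have hS0 : 0 ≤ S := Real.sqrt_nonneg _
  have hhalf : (∫ θ, ‖ψ θ‖ ^ 2 ∂μT) ^ (1 / 2 : ℝ) = S := by
    rw [hD, hSsq, Real.sqrt_eq_rpow]
  have hIhalf : (∫ θ, ‖φ θ‖ ^ 2 ∂μT) ^ (1 / 2 : ℝ) = Real.sqrt I := by
    rw [← hIdef, Real.sqrt_eq_rpow]
  have hfinal : I ≤ M * (Real.sqrt I * S) := by
    calc I ≤ ∫ θ, ‖φ θ‖ ^ 2 * ‖ψ θ‖ ∂μT := hb1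
      _ ≤ M * ∫ θ, ‖φ θ‖ * ‖ψ θ‖ ∂μT := hb2
      _ ≤ M * ((∫ θ, ‖φ θ‖ ^ 2 ∂μT) ^ (1 / 2 : ℝ) * (∫ θ, ‖ψ θ‖ ^ 2 ∂μT) ^ (1 / 2 : ℝ)) :=
          mul_le_mul_of_nonneg_left hCS hM0
      _ = M * (Real.sqrt I * S) := by rw [hIhalf, hhalf]
  have hgoal : Real.sqrt I ≤ S * M := by
    rcases eq_or_lt_of_le (Real.sqrt_nonneg I) with h0 | hpos
    · rw [← h0]; positivity
    · have hsq : Real.sqrt I * Real.sqrt I = I := Real.mul_self_sqrt hI0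
      nlinarith [hfinal]
  have hnrm : nrm2 φ = Real.sqrt I := by
    rw [nrm2, ← hIdef, Real.sqrt_eq_rpow]
  rw [hnrm, hc]
  exact hgoal
end

section
/- Let Θ be an inner function and let C be the conjugation Cf = conj(zf)Θ on K_Θ. If φ ∈ L² and A_φ is bounded on K_Θ, then C A_φ C = A_φ* (the adjoint of A_φ); in particular every bounded truncated Toeplitz operator is a complex symmetric operator with respect to C. -/
open MeasureTheory Complex Filter
open scoped ENNReal

/-- The natural conjugation `(Cf)(z) = conj(z f(z)) Θ(z)` on the model space `K_Θ`. -/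
noncomputable def Cfun (Θ : InnerFn) (f : 𝕋 → ℂ) (θ : 𝕋) : ℂ :=
  (starRingEnd ℂ) (bz θ * f θ) * Θ.toFun θ


section AuxTTO

open MeasureTheory
open scoped InnerProductSpace

private lemma hbz_norm (θ : 𝕋) : ‖bz θ‖ = 1 := by
  simp [bz, Circle.norm_coe]

private lemma hbz_cont : Continuous bz :=
  continuous_subtype_val.comp AddCircle.continuous_toCircle

private lemma unimod_mul_conj {z : ℂ} (h : ‖z‖ = 1) : z * (starRingEnd ℂ) z = 1 := by
  have h2 : Complex.normSq z = 1 := by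
    rw [← Complex.sq_norm, h]; norm_num
  rw [Complex.mul_conj, h2]; norm_num

private lemma bz_conj_mul (θ : 𝕋) : (starRingEnd ℂ) (bz θ) * bz θ = 1 := by
  rw [mul_comm]; exact unimod_mul_conj (hbz_norm θ)

private lemma asm_conj {a : 𝕋 → ℂ} (ha : AEStronglyMeasurable a μT) :
    AEStronglyMeasurable (fun θ => (starRingEnd ℂ) (a θ)) μT := by
  exact RCLike.continuous_conj.comp_aestronglyMeasurable ha

private lemma aux_memLp_conj {a : 𝕋 → ℂ} {p : ℝ≥0∞} (ha : MemLp a p μT) :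
    MemLp (fun θ => (starRingEnd ℂ) (a θ)) p μT :=
  MemLp.of_le ha (asm_conj ha.1) (Filter.Eventually.of_forall fun θ => by simp)

private lemma aux_int_mul {a b : 𝕋 → ℂ} (ha : MemLp a 2 μT) (hb : MemLp b 2 μT) :
    Integrable (fun θ => a θ * b θ) μT := by
  have h : MemLp (a • b) 1 μT := by
    haveI : ENNReal.HolderTriple 2 2 1 := ⟨by
      rw [inv_one, ENNReal.inv_two_add_inv_two]⟩
    exact hb.smul ha
  have he : (a • b) = fun θ => a θ * b θ := funext fun θ => by
    simp [Pi.smul_apply, smul_eq_mul]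
  rw [he] at h
  exact memLp_one_iff_integrable.mp h

private lemma aux_int_mul_conj {a b : 𝕋 → ℂ} (ha : MemLp a 2 μT) (hb : MemLp b 2 μT) :
    Integrable (fun θ => a θ * (starRingEnd ℂ) (b θ)) μT :=
  aux_int_mul ha (aux_memLp_conj hb)

private lemma ip_conj (a b : 𝕋 → ℂ) : ip a b = (starRingEnd ℂ) (ip b a) := by
  unfold ip
  rw [← integral_conj]
  refine integral_congr_ae (Filter.Eventually.of_forall fun θ => ?_)
  simp [mul_comm]

private lemma ip_sub {a b c : 𝕋 → ℂ}
    (ha : Integrable (fun θ => a θ * (starRingEnd ℂ) (c θ)) μT)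
    (hb : Integrable (fun θ => b θ * (starRingEnd ℂ) (c θ)) μT) :
    ip (fun θ => a θ - b θ) c = ip a c - ip b c := by
  unfold ip
  simp_rw [sub_mul]
  exact integral_sub ha hb

private lemma aux_fourierCoeff_congr_ae {a b : 𝕋 → ℂ} (h : a =ᵐ[μT] b) (n : ℤ) :
    fourierCoeff a n = fourierCoeff b n := by
  unfold fourierCoeff
  exact integral_congr_ae (h.mono fun θ hθ => by simp only [hθ])

/-- The key orthogonality: if `u, v` are `H²` functions, then `∫ z u v = 0`. -/
private lemma aux_bz_orth {u v : 𝕋 → ℂ} (hu2 : MemLp u 2 μT) (hv2 : MemLp v 2 μT)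
    (hu : ∀ n : ℤ, n < 0 → fourierCoeff u n = 0)
    (hv : ∀ n : ℤ, n < 0 → fourierCoeff v n = 0) :
    ∫ θ, bz θ * u θ * v θ ∂μT = 0 := by
  set k : 𝕋 → ℂ := fun θ => (starRingEnd ℂ) (bz θ * u θ) with hkdef
  have hkm : AEStronglyMeasurable k μT :=
    asm_conj (hbz_cont.aestronglyMeasurable.mul hu2.1)
  have hk2 : MemLp k 2 μT := by
    refine MemLp.of_le hu2 hkm (Filter.Eventually.of_forall fun θ => ?_)
    simp [hkdef, hbz_norm θ]
  set K : Lp ℂ 2 μT := hk2.toLp k with hKdef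
  set V : Lp ℂ 2 μT := hv2.toLp v with hVdef
  have hck : ∀ n : ℤ, (starRingEnd ℂ) (fourierCoeff k n) = fourierCoeff u (-(n + 1)) := by
    intro n
    unfold fourierCoeff
    rw [← integral_conj]
    refine integral_congr_ae (Filter.Eventually.of_forall fun θ => ?_)
    have h1 : (starRingEnd ℂ) (fourier (-n) θ) = fourier n θ := by
      rw [fourier_neg, Complex.conj_conj]
    have h2 : bz θ = fourier 1 θ := fourier_one.symm
    have h3 : - -(n + 1) = n + 1 := by ring
    calc (starRingEnd ℂ) (fourier (-n) θ • k θ)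
        = (fourier n θ * fourier 1 θ) * u θ := by
          rw [smul_eq_mul, hkdef]
          simp only [map_mul, h1, Complex.conj_conj, h2, mul_assoc]
      _ = fourier (n + 1) θ * u θ := by rw [← fourier_add]
      _ = fourier (- -(n + 1)) θ • u θ := by rw [h3, smul_eq_mul]
  have hKrepr : ∀ n : ℤ, fourierBasis.repr K n = fourierCoeff k n := fun n => by
    rw [fourierBasis_repr]
    exact aux_fourierCoeff_congr_ae hk2.coeFn_toLp n
  have hVrepr : ∀ n : ℤ, fourierBasis.repr V n = fourierCoeff v n := fun n => by
    rw [fourierBasis_repr]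
    exact aux_fourierCoeff_congr_ae hv2.coeFn_toLp n
  have hterm : ∀ n : ℤ, ⟪K, fourierBasis n⟫_ℂ * ⟪fourierBasis n, V⟫_ℂ = 0 := by
    intro n
    have hKi : ⟪K, fourierBasis n⟫_ℂ = (starRingEnd ℂ) (fourierCoeff k n) := by
      rw [← inner_conj_symm, ← fourierBasis.repr_apply_apply, hKrepr]
    have hVi : ⟪fourierBasis n, V⟫_ℂ = fourierCoeff v n := by
      rw [← fourierBasis.repr_apply_apply, hVrepr]
    rw [hKi, hVi, hck n]
    rcases lt_or_ge n 0 with h | h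
    · rw [hv n h, mul_zero]
    · rw [hu (-(n + 1)) (by omega), zero_mul]
  have hinner : ⟪K, V⟫_ℂ = 0 := by
    rw [← fourierBasis.tsum_inner_mul_inner K V]
    exact (tsum_congr hterm).trans tsum_zero
  have hid : ⟪K, V⟫_ℂ = ∫ θ, bz θ * u θ * v θ ∂μT := by
    rw [MeasureTheory.L2.inner_def]
    refine integral_congr_ae ?_
    filter_upwards [hk2.coeFn_toLp, hv2.coeFn_toLp] with θ h1 h2
    rw [RCLike.inner_apply, h1, h2,
      show k θ = (starRingEnd ℂ) (bz θ * u θ) from rfl, Complex.conj_conj]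
    exact mul_comm _ _
  rw [← hid, hinner]

private lemma theta_top (Θ : InnerFn) : MemLp Θ.toFun ⊤ μT :=
  memLp_top_of_bound Θ.memH2.1.1 1 (Θ.unimod.mono fun _ h => h.le)

private lemma cfun_memLp (Θ : InnerFn) {a : 𝕋 → ℂ} {p : ℝ≥0∞} (ha : MemLp a p μT) :
    MemLp (Cfun Θ a) p μT := by
  have hm : AEStronglyMeasurable (Cfun Θ a) μT := by
    unfold Cfun
    exact (asm_conj (hbz_cont.aestronglyMeasurable.mul ha.1)).mul Θ.memH2.1.1
  refine MemLp.of_le ha hm ?_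
  filter_upwards [Θ.unimod] with θ hθ
  unfold Cfun
  rw [norm_mul, RCLike.norm_conj, norm_mul, hbz_norm θ, hθ, one_mul, mul_one]

private lemma fourier_memH2 (m : ℤ) (hm : 0 ≤ m) :
    MemH2 (fun θ : 𝕋 => (fourier m θ : ℂ)) := by
  constructor
  · have htop : MemLp (fun θ : 𝕋 => (fourier m θ : ℂ)) ⊤ μT := by
      refine memLp_top_of_bound (fourier m).continuous.aestronglyMeasurable 1
        (Filter.Eventually.of_forall fun θ => ?_)
      simp only [fourier_apply]; exact (Circle.norm_coe _).le
    exact htop.mono_exponent le_top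
  · intro n hn
    have hne : n ≠ m := by omega
    have h1 : fourierCoeff (fun θ : 𝕋 => (fourier m θ : ℂ)) n =
        fourierCoeff ((fourierLp 2 m : Lp ℂ 2 μT) : 𝕋 → ℂ) n :=
      (aux_fourierCoeff_congr_ae (coeFn_fourierLp 2 m) n).symm
    rw [h1, ← fourierBasis_repr]
    have h2 : (fourierLp 2 m : Lp ℂ 2 μT) = fourierBasis m := by
      rw [← coe_fourierBasis]
    rw [h2, fourierBasis.repr_self]
    exact lp.single_apply_ne (E := fun _ : ℤ => ℂ) 2 m (1 : ℂ) hne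

private lemma cfun_memK (Θ : InnerFn) {a : 𝕋 → ℂ} (ha : MemK Θ a) :
    MemK Θ (Cfun Θ a) := by
  obtain ⟨⟨ha2, hacoeff⟩, haorth⟩ := ha
  refine ⟨⟨cfun_memLp Θ ha2, ?_⟩, ?_⟩
  · intro n hn
    set m : ℤ := -(n + 1) with hmdef
    have hm : 0 ≤ m := by omega
    have h0 : ip a (fun θ => Θ.toFun θ * fourier m θ) = 0 :=
      haorth _ (fourier_memH2 m hm)
    have hkey : fourierCoeff (Cfun Θ a) n =
        (starRingEnd ℂ) (ip a fun θ => Θ.toFun θ * fourier m θ) := by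
      unfold fourierCoeff ip
      rw [← integral_conj]
      refine integral_congr_ae (Filter.Eventually.of_forall fun θ => ?_)
      have h1 : (starRingEnd ℂ) (bz θ) = fourier (-1) θ := by
        rw [fourier_neg, fourier_one]; rfl
      have hm' : m = -n + -1 := by omega
      calc fourier (-n) θ • Cfun Θ a θ
          = (fourier (-n) θ * fourier (-1) θ) * ((starRingEnd ℂ) (a θ) * Θ.toFun θ) := by
            unfold Cfun
            rw [smul_eq_mul, map_mul, h1]
            ring
        _ = fourier m θ * ((starRingEnd ℂ) (a θ) * Θ.toFun θ) := by
            rw [hm', fourier_add]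
        _ = (starRingEnd ℂ) (a θ * (starRingEnd ℂ) (Θ.toFun θ * fourier m θ)) := by
            simp only [map_mul, Complex.conj_conj]
            ring
    rw [hkey, h0, map_zero]
  · intro h hh
    have h0 : ∫ θ, bz θ * a θ * h θ ∂μT = 0 :=
      aux_bz_orth ha2 hh.1 hacoeff hh.2
    have hkey : ip (Cfun Θ a) (fun θ => Θ.toFun θ * h θ) =
        (starRingEnd ℂ) (∫ θ, bz θ * a θ * h θ ∂μT) := by
      unfold ip Cfun
      rw [← integral_conj]
      refine integral_congr_ae ?_
      filter_upwards [Θ.unimod] with θ hθ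
      have hθ1 : Θ.toFun θ * (starRingEnd ℂ) (Θ.toFun θ) = 1 := unimod_mul_conj hθ
      calc (starRingEnd ℂ) (bz θ * a θ) * Θ.toFun θ *
            (starRingEnd ℂ) (Θ.toFun θ * h θ)
          = (starRingEnd ℂ) (bz θ * a θ * h θ) *
              (Θ.toFun θ * (starRingEnd ℂ) (Θ.toFun θ)) := by
            simp only [map_mul]
            ring
        _ = (starRingEnd ℂ) (bz θ * a θ * h θ) := by rw [hθ1, mul_one]
    rw [hkey, h0, map_zero]

end AuxTTO

/-- every bounded truncated Toeplitz operator is complex symmetric with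
respect to `C`: `C A_φ C = A_φ*`, expressed weakly as
`⟨Cg, A_φ(Cf)⟩ = ⟨f, A_φ g⟩` for all `f, g` in the domain. -/
theorem ttOperator_complex_symmetric (Θ : InnerFn) (φ : 𝕋 → ℂ) (hφ : MemLp φ 2 μT)
    (hbdd : ttNorm Θ φ < ⊤) (f g pf pg : 𝕋 → ℂ)
    (hf : MemK Θ f) (hfInf : MemLp f ⊤ μT) (hg : MemK Θ g) (hgInf : MemLp g ⊤ μT)
    (hpf : IsProjK Θ (fun θ => φ θ * Cfun Θ f θ) pf)
    (hpg : IsProjK Θ (fun θ => φ θ * g θ) pg) :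
    ip (Cfun Θ g) pf = ip f pg := by
  have hg2 : MemLp g 2 μT := hg.1.1
  have hf2 : MemLp f 2 μT := hf.1.1
  have hpf2 : MemLp pf 2 μT := hpf.1.1.1
  have hpg2 : MemLp pg 2 μT := hpg.1.1.1
  have hCg2 : MemLp (Cfun Θ g) 2 μT := cfun_memLp Θ hg2
  have hCgK : MemK Θ (Cfun Θ g) := cfun_memK Θ hg
  have hCfTop : MemLp (Cfun Θ f) ⊤ μT := cfun_memLp Θ hfInf
  have hφCf : MemLp (fun θ => φ θ * Cfun Θ f θ) 2 μT := by
    have h := MemLp.smul (r := 2) hCfTop hφ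
    have he : (φ • Cfun Θ f) = fun θ => φ θ * Cfun Θ f θ := funext fun θ => by
      simp [Pi.smul_apply, smul_eq_mul]
    rwa [he] at h
  have hφg : MemLp (fun θ => φ θ * g θ) 2 μT := by
    have h := MemLp.smul (r := 2) hgInf hφ
    have he : (φ • g) = fun θ => φ θ * g θ := funext fun θ => by
      simp [Pi.smul_apply, smul_eq_mul]
    rwa [he] at h
  -- A_φ (Cf) tested against Cg
  have e1 : ip (fun θ => φ θ * Cfun Θ f θ) (Cfun Θ g) = ip pf (Cfun Θ g) := by
    have h0 : ip (fun θ => (φ θ * Cfun Θ f θ) - pf θ) (Cfun Θ g) = 0 := hpf.2 _ hCgK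
    rw [ip_sub (aux_int_mul_conj hφCf hCg2) (aux_int_mul_conj hpf2 hCg2)] at h0
    exact (sub_eq_zero.mp h0).symm ▸ rfl
  -- A_φ g tested against f
  have e2 : ip (fun θ => φ θ * g θ) f = ip pg f := by
    have h0 : ip (fun θ => (φ θ * g θ) - pg θ) f = 0 := hpg.2 f hf
    rw [ip_sub (aux_int_mul_conj hφg hf2) (aux_int_mul_conj hpg2 hf2)] at h0
    exact sub_eq_zero.mp h0
  -- the pointwise identity ⟨φ Cf, Cg⟩ = ⟨φ g, f⟩
  have e3 : ip (fun θ => φ θ * Cfun Θ f θ) (Cfun Θ g) = ip (fun θ => φ θ * g θ) f := by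
    unfold ip Cfun
    refine integral_congr_ae ?_
    filter_upwards [Θ.unimod] with θ hθ
    have hθ1 : Θ.toFun θ * (starRingEnd ℂ) (Θ.toFun θ) = 1 := unimod_mul_conj hθ
    have hb1 := bz_conj_mul θ
    calc φ θ * ((starRingEnd ℂ) (bz θ * f θ) * Θ.toFun θ) *
          (starRingEnd ℂ) ((starRingEnd ℂ) (bz θ * g θ) * Θ.toFun θ)
        = (φ θ * g θ * (starRingEnd ℂ) (f θ)) * ((starRingEnd ℂ) (bz θ) * bz θ) *
            (Θ.toFun θ * (starRingEnd ℂ) (Θ.toFun θ)) := by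
          simp only [map_mul, Complex.conj_conj]
          ring
      _ = φ θ * g θ * (starRingEnd ℂ) (f θ) := by
          rw [hb1, hθ1, mul_one, mul_one]
  calc ip (Cfun Θ g) pf
      = (starRingEnd ℂ) (ip pf (Cfun Θ g)) := ip_conj _ _
    _ = (starRingEnd ℂ) (ip (fun θ => φ θ * Cfun Θ f θ) (Cfun Θ g)) := by rw [e1]
    _ = (starRingEnd ℂ) (ip (fun θ => φ θ * g θ) f) := by rw [e3]
    _ = (starRingEnd ℂ) (ip pg f) := by rw [e2]
    _ = ip f pg := (ip_conj f pg).symm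
end

section
/- Let Θ be a non-constant inner function, ψ₁, ψ₂ ∈ K_Θ, and φ = ψ₁ + ψ₂·conj(Θ). Then ‖ψ₁ - conj(Θ(0))·ψ₂‖ / (1 - |Θ(0)|²)^{1/2} ≤ ‖A_φ‖. -/
open MeasureTheory Complex Filter
open scoped ENNReal

section AuxTT17
open scoped ComplexConjugate

noncomputable section

namespace TT17

lemma m2_int {f : 𝕋 → ℂ} (hf : MemLp f 2 μT) : Integrable f μT :=
  hf.integrable one_le_two

lemma m2_mul_int {f g : 𝕋 → ℂ} (hf : MemLp f 2 μT) (hg : MemLp g 2 μT) :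
    Integrable (fun θ => f θ * g θ) μT := by
  rw [← memLp_one_iff_integrable]
  have h := MemLp.smul (φ := f) hg hf (p := 2) (q := 2) (r := 1)
  simpa [Pi.smul_apply', smul_eq_mul, Pi.mul_def] using h

lemma m2_conj {f : 𝕋 → ℂ} (hf : MemLp f 2 μT) : MemLp (fun θ => conj (f θ)) 2 μT := by
  have h := hf.inner_const (𝕜 := ℂ) (1 : ℂ)
  simpa [RCLike.inner_apply] using h

lemma memTop (Θ : InnerFn) : MemLp Θ.toFun ⊤ μT :=
  memLp_top_of_bound Θ.memH2.1.1 1 (Θ.unimod.mono fun _ h => le_of_eq h)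

lemma m2_innermul {f : 𝕋 → ℂ} (Θ : InnerFn) (hf : MemLp f 2 μT) :
    MemLp (fun θ => Θ.toFun θ * f θ) 2 μT := by
  have h := MemLp.smul (r := 2) hf (memTop Θ)
  simpa [Pi.smul_apply', smul_eq_mul, Pi.mul_def] using h

lemma fourierCoeff_congr_ae {f g : 𝕋 → ℂ} (h : f =ᵐ[μT] g) (n : ℤ) :
    fourierCoeff f n = fourierCoeff g n :=
  integral_congr_ae (h.mono fun θ hθ => by simp only [hθ])

lemma fourierCoeff_conj (f : 𝕋 → ℂ) (n : ℤ) :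
    fourierCoeff (fun θ => conj (f θ)) n = conj (fourierCoeff f (-n)) := by
  unfold fourierCoeff
  rw [← integral_conj]
  congr 1
  ext θ
  rw [neg_neg]
  simp [smul_eq_mul, ← fourier_neg]

lemma fourierCoeff_zero_eq (f : 𝕋 → ℂ) : fourierCoeff f 0 = ∫ θ, f θ ∂μT := by
  unfold fourierCoeff
  simp [fourier_zero]

end TT17

namespace TT17

lemma pairing {f g : 𝕋 → ℂ} (hf : MemH2 f) (hg : MemH2 g) :
    ∫ θ, f θ * g θ ∂μT = fourierCoeff f 0 * fourierCoeff g 0 := by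
  have hcf : MemLp (fun θ => conj (f θ)) 2 μT := m2_conj hf.1
  set X := hcf.toLp _ with hX
  set Y := hg.1.toLp _ with hY
  have hXc : ∀ n, fourierCoeff (X : 𝕋 → ℂ) n = conj (fourierCoeff f (-n)) := fun n =>
    (fourierCoeff_congr_ae (hcf.coeFn_toLp) n).trans (fourierCoeff_conj f n)
  have hYc : ∀ n, fourierCoeff (Y : 𝕋 → ℂ) n = fourierCoeff g n := fun n =>
    fourierCoeff_congr_ae (hg.1.coeFn_toLp) n
  have h1 : (inner ℂ X Y : ℂ) = ∫ θ, f θ * g θ ∂μT := by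
    rw [MeasureTheory.L2.inner_def]
    refine integral_congr_ae ?_
    filter_upwards [hcf.coeFn_toLp, hg.1.coeFn_toLp] with θ e1 e2
    simp [hX, hY, e1, e2, RCLike.inner_apply, mul_comm]
  have h2 : (inner ℂ X Y : ℂ) =
      ∑' n : ℤ, (inner ℂ X (fourierBasis n) : ℂ) * inner ℂ (fourierBasis n) Y :=
    (fourierBasis.tsum_inner_mul_inner X Y).symm
  have h3 : ∀ n : ℤ, (inner ℂ X (fourierBasis n) : ℂ) * inner ℂ (fourierBasis n) Y =
      fourierCoeff f (-n) * fourierCoeff g n := by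
    intro n
    rw [← inner_conj_symm X]
    simp only [← HilbertBasis.repr_apply_apply]
    rw [fourierBasis_repr, fourierBasis_repr, hXc, hYc]
    simp
  rw [← h1, h2, tsum_eq_single 0 ?_]
  · rw [h3 0]; simp
  · intro n hn
    rw [h3 n]
    rcases lt_or_gt_of_ne hn with h | h
    · rw [hg.2 n h, mul_zero]
    · rw [hf.2 (-n) (by omega), zero_mul]

end TT17

namespace TT17

lemma norm_bz (θ : 𝕋) : ‖bz θ‖ = 1 := by
  simp [bz, Circle.norm_coe]

lemma dval_zero (Θ : InnerFn) : Θ.dval 0 = ∫ θ, Θ.toFun θ ∂μT := by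
  unfold InnerFn.dval poisson
  congr 1
  ext θ
  have : ‖bz θ‖ = 1 := norm_bz θ
  simp [this]

lemma integrable_fourier_smul {f : 𝕋 → ℂ} (hf : Integrable f μT) (n : ℤ) :
    Integrable (fun t : 𝕋 => fourier n t • f t) μT := by
  refine Integrable.bdd_mul hf ?_ (c := 1) (Eventually.of_forall fun t => ?_)
  · exact (map_continuous (fourier n)).aestronglyMeasurable
  · simp [Circle.norm_coe]

lemma fourierCoeff_add {f g : 𝕋 → ℂ} (hf : Integrable f μT) (hg : Integrable g μT) (n : ℤ) :
    fourierCoeff (fun θ => f θ + g θ) n = fourierCoeff f n + fourierCoeff g n := by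
  unfold fourierCoeff
  rw [← integral_add (integrable_fourier_smul hf _) (integrable_fourier_smul hg _)]
  congr 1
  ext θ
  simp [smul_add, mul_add]

lemma memH2_const (a : ℂ) : MemH2 (fun _ : 𝕋 => a) := by
  refine ⟨memLp_const a, fun n hn => ?_⟩
  unfold fourierCoeff
  rw [integral_smul_const]
  have h0 : ∫ θ : 𝕋, fourier (-n) θ ∂μT = 0 :=
    integral_eq_zero_of_add_right_eq_neg
      (fourier_add_half_inv_index (by omega) (Fact.out : (0:ℝ) < 2 * Real.pi))
  rw [h0, zero_smul]

lemma memH2_combo {f g : 𝕋 → ℂ} (hf : MemH2 f) (hg : MemH2 g) (a b : ℂ) :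
    MemH2 (fun θ => a * f θ + b * g θ) := by
  refine ⟨?_, fun n hn => ?_⟩
  · exact ((hf.1.const_mul a).add (hg.1.const_mul b))
  · rw [fourierCoeff_add ((m2_int hf.1).const_mul a) ((m2_int hg.1).const_mul b),
      fourierCoeff.const_mul, fourierCoeff.const_mul, hf.2 n hn, hg.2 n hn]
    simp

end TT17

namespace TT17

lemma mul_conj_self {z : ℂ} (h : ‖z‖ = 1) : z * conj z = 1 := by
  rw [Complex.mul_conj]
  norm_cast
  rw [Complex.normSq_eq_norm_sq, h, one_pow]

lemma re_mul_conj (a : ℂ) : (a * conj a).re = ‖a‖ ^ 2 := by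
  rw [Complex.mul_conj]
  norm_cast
  rw [Complex.normSq_eq_norm_sq]

lemma int_sq (Θ : InnerFn) (a b : ℂ) :
    ∫ θ, ‖a + b * Θ.toFun θ‖ ^ 2 ∂μT
      = ‖a‖ ^ 2 + ‖b‖ ^ 2 + 2 * (conj a * b * ∫ θ, Θ.toFun θ ∂μT).re := by
  have hΘ2 := Θ.memH2.1
  have hw : MemLp (fun θ => a + b * Θ.toFun θ) 2 μT := (memLp_const a).add (hΘ2.const_mul b)
  have hint : Integrable (fun θ => (a + b * Θ.toFun θ) * conj (a + b * Θ.toFun θ)) μT :=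
    m2_mul_int hw (m2_conj hw)
  have hre : ∀ θ, (‖a + b * Θ.toFun θ‖ ^ 2 : ℝ)
      = ((a + b * Θ.toFun θ) * conj (a + b * Θ.toFun θ)).re := fun θ => (re_mul_conj _).symm
  have e : ∀ᵐ θ ∂μT, (a + b * Θ.toFun θ) * conj (a + b * Θ.toFun θ)
      = (a * conj a + b * conj b) + (a * conj b) * conj (Θ.toFun θ)
        + (conj a * b) * Θ.toFun θ := by
    filter_upwards [Θ.unimod] with θ h
    have hz : Θ.toFun θ * conj (Θ.toFun θ) = 1 := mul_conj_self h
    simp only [map_add, map_mul]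
    linear_combination (b * conj b) * hz
  have i2 : Integrable (fun θ => (a * conj b) * conj (Θ.toFun θ)) μT :=
    (m2_int (m2_conj hΘ2)).const_mul _
  have i3 : Integrable (fun θ => (conj a * b) * Θ.toFun θ) μT :=
    (m2_int hΘ2).const_mul _
  calc ∫ θ, ‖a + b * Θ.toFun θ‖ ^ 2 ∂μT
      = (∫ θ, (a + b * Θ.toFun θ) * conj (a + b * Θ.toFun θ) ∂μT).re := by
        simp_rw [hre]
        simpa only [RCLike.re_to_complex] using integral_re hint
    _ = ((a * conj a + b * conj b) + (a * conj b) * conj (∫ θ, Θ.toFun θ ∂μT)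
          + (conj a * b) * ∫ θ, Θ.toFun θ ∂μT).re := by
        rw [integral_congr_ae e,
          integral_add (f := fun θ => a * conj a + b * conj b + a * conj b * conj (Θ.toFun θ))
            (g := fun θ => conj a * b * Θ.toFun θ) ((integrable_const _).add i2) i3,
          integral_add (f := fun _ => a * conj a + b * conj b)
            (g := fun θ => a * conj b * conj (Θ.toFun θ)) (integrable_const _) i2,
          integral_const, integral_const_mul, integral_const_mul, integral_conj]
        simp
    _ = _ := ?_
  have h4 : ((a * conj b) * conj (∫ θ, Θ.toFun θ ∂μT)).re
      = ((conj a * b) * ∫ θ, Θ.toFun θ ∂μT).re := by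
    rw [show (a * conj b) * conj (∫ θ, Θ.toFun θ ∂μT)
        = conj ((conj a * b) * ∫ θ, Θ.toFun θ ∂μT) by simp [map_mul]]
    exact Complex.conj_re _
  simp only [Complex.add_re, h4, re_mul_conj]
  ring

end TT17

namespace TT17

lemma sub_sq_int (Θ : InnerFn) :
    ∫ θ, ‖Θ.toFun θ - (∫ t, Θ.toFun t ∂μT)‖ ^ 2 ∂μT = 1 - ‖∫ t, Θ.toFun t ∂μT‖ ^ 2 := by
  set c := ∫ t, Θ.toFun t ∂μT with hc
  have h := int_sq Θ (-c) 1
  have hre : (conj (-c) * 1 * c).re = -‖c‖ ^ 2 := by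
    have : conj (-c) * 1 * c = -(c * conj c) := by rw [map_neg]; ring
    rw [this, Complex.neg_re, re_mul_conj c]
  calc ∫ θ, ‖Θ.toFun θ - c‖ ^ 2 ∂μT = ∫ θ, ‖-c + 1 * Θ.toFun θ‖ ^ 2 ∂μT := by
        congr 1; ext θ; rw [one_mul, neg_add_eq_sub]
    _ = ‖-c‖ ^ 2 + ‖(1:ℂ)‖ ^ 2 + 2 * (conj (-c) * 1 * c).re := h
    _ = 1 - ‖c‖ ^ 2 := by rw [hre]; simp [norm_neg]; ring

lemma c_lt_one (Θ : InnerFn) (hΘ : Θ.NonConst) : ‖∫ t, Θ.toFun t ∂μT‖ < 1 := by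
  set c := ∫ t, Θ.toFun t ∂μT with hc
  by_contra hge
  push_neg at hge
  have h1 : 1 - ‖c‖ ^ 2 ≤ 0 := by nlinarith [norm_nonneg c]
  have hint : Integrable (fun θ => ‖Θ.toFun θ - c‖ ^ 2) μT := by
    have hm : MemLp (fun θ => Θ.toFun θ - c) 2 μT := Θ.memH2.1.sub (memLp_const c)
    simpa using hm.norm.integrable_sq
  have h2 : 0 ≤ ∫ θ, ‖Θ.toFun θ - c‖ ^ 2 ∂μT := integral_nonneg fun θ => sq_nonneg _
  have h3 : ∫ θ, ‖Θ.toFun θ - c‖ ^ 2 ∂μT = 0 := le_antisymm (by rw [sub_sq_int Θ]; exact h1) h2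
  have h4 : (fun θ => ‖Θ.toFun θ - c‖ ^ 2) =ᵐ[μT] 0 :=
    (integral_eq_zero_iff_of_nonneg_ae (Eventually.of_forall fun θ => sq_nonneg _) hint).mp h3
  exact hΘ ⟨c, h4.mono fun θ h => by
    have : ‖Θ.toFun θ - c‖ = 0 := by
      have := h
      simp only [Pi.zero_apply] at this
      nlinarith [norm_nonneg (Θ.toFun θ - c)]
    rwa [norm_eq_zero, sub_eq_zero] at this⟩

end TT17

namespace TT17

lemma ip_congr_left {f f' g : 𝕋 → ℂ} (h : f =ᵐ[μT] f') : ip f g = ip f' g :=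
  integral_congr_ae (h.mono fun θ hθ => by simp only [hθ])

lemma ip_lin {f g h : 𝕋 → ℂ} (hf : Integrable (fun θ => f θ * conj (h θ)) μT)
    (hg : Integrable (fun θ => g θ * conj (h θ)) μT) (a b : ℂ) :
    ip (fun θ => a * f θ + b * g θ) h = a * ip f h + b * ip g h := by
  unfold ip
  rw [← integral_const_mul, ← integral_const_mul,
    ← integral_add (hf.const_mul a) (hg.const_mul b)]
  congr 1
  ext θ
  ring

lemma ip_conj_swap (f g : 𝕋 → ℂ) : ip f g = conj (ip g f) := by
  unfold ip
  rw [← integral_conj]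
  congr 1
  ext θ
  simp only [map_mul, RingHomCompTriple.comp_apply, RingHom.id_apply, Complex.conj_conj]
  ring

lemma ip_shift (Θ : InnerFn) (ψ h : 𝕋 → ℂ) :
    ip (fun θ => ψ θ * conj (Θ.toFun θ)) h = ip ψ (fun θ => Θ.toFun θ * h θ) := by
  unfold ip
  congr 1
  ext θ
  simp only [map_mul]
  ring

/-- `ip` of `a•1 + b•Θ` against `Θ g` for `g ∈ H²`. -/
lemma k0_orth (Θ : InnerFn) {g : 𝕋 → ℂ} (hg : MemH2 g) (a b : ℂ) :
    ip (fun θ => a * 1 + b * Θ.toFun θ) (fun θ => Θ.toFun θ * g θ) =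
      (a * conj (∫ t, Θ.toFun t ∂μT) + b) * conj (fourierCoeff g 0) := by
  have hΘ2 := Θ.memH2.1
  have hΘg : MemLp (fun θ => Θ.toFun θ * g θ) 2 μT := m2_innermul Θ hg.1
  have h1 : Integrable (fun θ => (1:ℂ) * conj (Θ.toFun θ * g θ)) μT := by
    simpa using m2_int (m2_conj hΘg)
  have h2 : Integrable (fun θ => Θ.toFun θ * conj (Θ.toFun θ * g θ)) μT :=
    m2_mul_int hΘ2 (m2_conj hΘg)
  rw [ip_lin h1 h2 a b]
  have e1 : ip (fun _ => (1:ℂ)) (fun θ => Θ.toFun θ * g θ)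
      = conj (∫ t, Θ.toFun t ∂μT) * conj (fourierCoeff g 0) := by
    unfold ip
    calc ∫ θ, (1:ℂ) * conj (Θ.toFun θ * g θ) ∂μT
        = conj (∫ θ, Θ.toFun θ * g θ ∂μT) := by
          rw [← integral_conj]; congr 1; ext θ; rw [one_mul]
      _ = _ := by
          rw [pairing Θ.memH2 hg, map_mul, fourierCoeff_zero_eq]
  have e2 : ip Θ.toFun (fun θ => Θ.toFun θ * g θ) = conj (fourierCoeff g 0) := by
    unfold ip
    have he : (fun θ => Θ.toFun θ * conj (Θ.toFun θ * g θ)) =ᵐ[μT] fun θ => conj (g θ) := by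
      filter_upwards [Θ.unimod] with θ h
      have hz : Θ.toFun θ * conj (Θ.toFun θ) = 1 := mul_conj_self h
      calc Θ.toFun θ * conj (Θ.toFun θ * g θ)
          = (Θ.toFun θ * conj (Θ.toFun θ)) * conj (g θ) := by rw [map_mul]; ring
        _ = conj (g θ) := by rw [hz, one_mul]
    rw [integral_congr_ae he, integral_conj, ← fourierCoeff_zero_eq]
  rw [e1, e2]
  ring

end TT17

namespace TT17

lemma m2_mul_conj_inner (Θ : InnerFn) {ψ : 𝕋 → ℂ} (hψ : MemLp ψ 2 μT) :
    MemLp (fun θ => ψ θ * conj (Θ.toFun θ)) 2 μT := by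
  have hconjTop : MemLp (fun θ => conj (Θ.toFun θ)) ⊤ μT := by
    refine memLp_top_of_bound (m2_conj Θ.memH2.1).1 1 ?_
    filter_upwards [Θ.unimod] with θ h
    simpa using le_of_eq h
  have h := MemLp.smul (r := 2) hψ hconjTop
  have he : (fun θ => conj (Θ.toFun θ)) • ψ = fun θ => ψ θ * conj (Θ.toFun θ) := by
    funext θ; simp [Pi.smul_apply', smul_eq_mul, mul_comm]
  rwa [he] at h

lemma memK_combo {Θ : InnerFn} {f g : 𝕋 → ℂ} (hf : MemK Θ f) (hg : MemK Θ g) (a b : ℂ) :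
    MemK Θ (fun θ => a * f θ + b * g θ) := by
  refine ⟨memH2_combo hf.1 hg.1 a b, fun h hh => ?_⟩
  have hΘh : MemLp (fun θ => Θ.toFun θ * h θ) 2 μT := m2_innermul Θ hh.1
  rw [ip_lin (m2_mul_int hf.1.1 (m2_conj hΘh)) (m2_mul_int hg.1.1 (m2_conj hΘh)) a b,
    hf.2 h hh, hg.2 h hh]
  simp

lemma nrm2_smul (r : ℝ) (hr : 0 ≤ r) (w : 𝕋 → ℂ) :
    nrm2 (fun θ => (r : ℂ) * w θ) = r * nrm2 w := by
  unfold nrm2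
  have he : ∀ θ, ‖(r:ℂ) * w θ‖ ^ 2 = r ^ 2 * ‖w θ‖ ^ 2 := by
    intro θ; rw [norm_mul, Complex.norm_real, Real.norm_of_nonneg hr, mul_pow]
  simp_rw [he]
  rw [integral_const_mul, Real.mul_rpow (sq_nonneg r) (integral_nonneg fun θ => sq_nonneg _)]
  congr 1
  rw [← Real.rpow_natCast r 2, ← Real.rpow_mul hr]
  norm_num

end TT17

end
end AuxTT17

open scoped ComplexConjugate

/-- for `ψ₁, ψ₂ ∈ K_Θ` and `φ = ψ₁ + ψ₂ conj(Θ)`,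
`‖ψ₁ - conj(Θ(0)) ψ₂‖ / (1-|Θ(0)|²)^{1/2} ≤ ‖A_φ‖`. -/
theorem ttNorm_lower_mixed (Θ : InnerFn) (hΘ : Θ.NonConst) (ψ₁ ψ₂ : 𝕋 → ℂ)
    (hψ₁ : MemK Θ ψ₁) (hψ₂ : MemK Θ ψ₂) (φ : 𝕋 → ℂ)
    (hφ : φ = fun θ => ψ₁ θ + ψ₂ θ * (starRingEnd ℂ) (Θ.toFun θ)) :
    ENNReal.ofReal (nrm2 (fun θ => ψ₁ θ - (starRingEnd ℂ) (Θ.dval 0) * ψ₂ θ) /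
      Real.sqrt (1 - ‖Θ.dval 0‖ ^ 2)) ≤ ttNorm Θ φ := by
  open TT17 in
  set c : ℂ := Θ.dval 0 with hcdef
  have hcint : c = ∫ t, Θ.toFun t ∂μT := TT17.dval_zero Θ
  have hclt : ‖c‖ < 1 := by rw [hcint]; exact TT17.c_lt_one Θ hΘ
  have ht : 0 < 1 - ‖c‖ ^ 2 := by nlinarith [norm_nonneg c]
  set s : ℝ := Real.sqrt (1 - ‖c‖ ^ 2) with hsdef
  have hs : 0 < s := Real.sqrt_pos.mpr ht
  set w : 𝕋 → ℂ := fun θ => ψ₁ θ - conj c * ψ₂ θ with hwdef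
  set f : 𝕋 → ℂ := fun θ => ((s⁻¹ : ℝ) : ℂ) * (1 - conj c * Θ.toFun θ) with hfdef
  set p : 𝕋 → ℂ := fun θ => ((s⁻¹ : ℝ) : ℂ) * w θ with hpdef
  -- MemK f
  have hfH2 : MemH2 f := by
    have h := TT17.memH2_combo (TT17.memH2_const 1) Θ.memH2
      ((s⁻¹ : ℝ) : ℂ) (-((s⁻¹ : ℝ) : ℂ) * conj c)
    have he : f = fun θ => ((s⁻¹ : ℝ) : ℂ) * (fun _ : 𝕋 => (1:ℂ)) θ
        + (-((s⁻¹ : ℝ) : ℂ) * conj c) * Θ.toFun θ := by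
      funext θ; simp only [hfdef]; ring
    rw [he]; exact h
  have hfK : MemK Θ f := by
    refine ⟨hfH2, fun g hg => ?_⟩
    have he : f = fun θ => ((s⁻¹ : ℝ) : ℂ) * 1 + (-((s⁻¹ : ℝ) : ℂ) * conj c) * Θ.toFun θ := by
      funext θ; simp only [hfdef]; ring
    rw [he, TT17.k0_orth Θ hg, ← hcint]
    ring_nf
  -- f ∈ L∞
  have hftop : MemLp f ⊤ μT := by
    refine memLp_top_of_bound hfH2.1.1 (s⁻¹ * 2) ?_
    filter_upwards [Θ.unimod] with θ h
    have h1 : ‖f θ‖ = s⁻¹ * ‖1 - conj c * Θ.toFun θ‖ := by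
      rw [hfdef, norm_mul, Complex.norm_real, Real.norm_of_nonneg (inv_nonneg.mpr hs.le)]
    have h2 : ‖1 - conj c * Θ.toFun θ‖ ≤ 2 := by
      calc ‖1 - conj c * Θ.toFun θ‖ ≤ ‖(1:ℂ)‖ + ‖conj c * Θ.toFun θ‖ := norm_sub_le _ _
        _ ≤ 2 := by
          rw [norm_mul, h]
          simp only [norm_one, RCLike.norm_conj, mul_one]
          linarith
    rw [h1]
    exact mul_le_mul_of_nonneg_left h2 (inv_nonneg.mpr hs.le)
  -- nrm2 f = 1
  have hint1 : ∫ θ, ‖1 - conj c * Θ.toFun θ‖ ^ 2 ∂μT = 1 - ‖c‖ ^ 2 := by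
    have h := TT17.int_sq Θ 1 (-(conj c))
    rw [← hcint] at h
    have he : ∀ θ, ‖(1:ℂ) + -(conj c) * Θ.toFun θ‖ ^ 2 = ‖1 - conj c * Θ.toFun θ‖ ^ 2 := by
      intro θ; rw [neg_mul, ← sub_eq_add_neg]
    simp_rw [he] at h
    rw [h]
    have h3 : (conj (1:ℂ) * -(conj c) * c).re = -‖c‖ ^ 2 := by
      have he2 : conj (1:ℂ) * -(conj c) * c = -(c * conj c) := by rw [map_one]; ring
      rw [he2, Complex.neg_re, TT17.re_mul_conj c]
    rw [h3]
    simp only [norm_one, norm_neg, RCLike.norm_conj]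
    ring
  have hnrm : nrm2 f = 1 := by
    have h := TT17.nrm2_smul s⁻¹ (inv_nonneg.mpr hs.le) (fun θ => 1 - conj c * Θ.toFun θ)
    rw [hfdef]
    rw [h]
    unfold nrm2
    rw [hint1, ← Real.sqrt_eq_rpow, ← hsdef]
    exact inv_mul_cancel₀ hs.ne'
  -- MemK p
  have hpK : MemK Θ p := by
    have h := TT17.memK_combo hψ₁ hψ₂ ((s⁻¹ : ℝ) : ℂ) (-((s⁻¹ : ℝ) : ℂ) * conj c)
    have he : p = fun θ => ((s⁻¹ : ℝ) : ℂ) * ψ₁ θ + (-((s⁻¹ : ℝ) : ℂ) * conj c) * ψ₂ θ := by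
      funext θ; simp only [hpdef, hwdef]; ring
    rw [he]; exact h
  -- projection property
  have hproj : ∀ k : 𝕋 → ℂ, MemK Θ k → ip (fun θ => φ θ * f θ - p θ) k = 0 := by
    intro k hk
    have haeq : (fun θ => φ θ * f θ - p θ) =ᵐ[μT]
        fun θ => (((s⁻¹ : ℝ) : ℂ) * (-(conj c))) * (Θ.toFun θ * ψ₁ θ)
          + ((s⁻¹ : ℝ) : ℂ) * (ψ₂ θ * conj (Θ.toFun θ)) := by
      filter_upwards [Θ.unimod] with θ h
      have hz : Θ.toFun θ * conj (Θ.toFun θ) = 1 := TT17.mul_conj_self h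
      simp only [hφ, hfdef, hpdef, hwdef]
      linear_combination (-((s⁻¹ : ℝ) : ℂ) * conj c * ψ₂ θ) * hz
    rw [TT17.ip_congr_left haeq]
    have i1 : Integrable (fun θ => (Θ.toFun θ * ψ₁ θ) * conj (k θ)) μT :=
      TT17.m2_mul_int (TT17.m2_innermul Θ hψ₁.1.1) (TT17.m2_conj hk.1.1)
    have i2 : Integrable (fun θ => (ψ₂ θ * conj (Θ.toFun θ)) * conj (k θ)) μT :=
      TT17.m2_mul_int (TT17.m2_mul_conj_inner Θ hψ₂.1.1) (TT17.m2_conj hk.1.1)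
    rw [TT17.ip_lin i1 i2]
    have e1 : ip (fun θ => Θ.toFun θ * ψ₁ θ) k = 0 := by
      rw [TT17.ip_conj_swap, hk.2 ψ₁ hψ₁.1, map_zero]
    have e2 : ip (fun θ => ψ₂ θ * conj (Θ.toFun θ)) k = 0 := by
      rw [TT17.ip_shift, hψ₂.2 k hk.1]
    rw [e1, e2]
    ring
  -- value
  have hval : nrm2 p = nrm2 w / s := by
    rw [hpdef, TT17.nrm2_smul s⁻¹ (inv_nonneg.mpr hs.le) w, div_eq_inv_mul]
  refine le_sSup ?_
  refine ⟨f, p, hfK, hftop, hnrm, ⟨hpK, hproj⟩, ?_⟩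
  rw [hval]
end
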